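/- Let H be a real Hilbert space, F : H → H Fréchet differentiable, and suppose ‖F'(x₁) − F'(x₂)‖ ≤ M₂‖x₁ − x₂‖ on U(r̃, x₀) with r̃ = 1/(2 M₂ m₁) and m₁ = ‖[F'(x₀)]⁻¹‖. Then for every h ∈ U(r̃, x₀): (F'(h)[F'(x₀)]⁻¹ F(h), F(h)) ≥ (1/2)‖F(h)‖², i.e. setting Φ(h) = −[F'(x₀)]⁻¹F(h) one has (F'(h)Φ(h), F(h)) ≤ −(1/2)‖F(h)‖². -/

import Mathlib

open RealInnerProductSpace

/-- the key coercivity estimate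
(F'(h)[F'(x₀)]⁻¹F(h), F(h)) ≥ (1/2)‖F(h)‖² on the ball U(r̃,x₀). -/
theorem stmt3
    {H : Type*} [NormedAddCommGroup H] [InnerProductSpace ℝ H] [CompleteSpace H]
    (F : H → H) (F' : H → H →L[ℝ] H)
    (hF : ∀ x, HasFDerivAt F (F' x) x)
    (x₀ : H) (A : H ≃L[ℝ] H) (hA : (A : H →L[ℝ] H) = F' x₀)
    (M₂ m₁ rtilde : ℝ) (hM₂ : 0 < M₂)
    (hm₁ : m₁ = ‖(A.symm : H →L[ℝ] H)‖)
    (hrtilde : rtilde = 1 / (2 * M₂ * m₁))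
    (hLip : ∀ x₁ ∈ Metric.closedBall x₀ rtilde, ∀ x₂ ∈ Metric.closedBall x₀ rtilde,
      ‖F' x₁ - F' x₂‖ ≤ M₂ * ‖x₁ - x₂‖) :
    ∀ h ∈ Metric.closedBall x₀ rtilde,
      (1 / 2) * ‖F h‖ ^ 2 ≤ ⟪F' h (A.symm (F h)), F h⟫ ∧
      ⟪F' h (-(A.symm (F h))), F h⟫ ≤ -(1 / 2) * ‖F h‖ ^ 2 := by
  intro h hh
  have hm₁0 : 0 ≤ m₁ := hm₁ ▸ norm_nonneg _
  have hr0 : 0 ≤ rtilde := by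
    rw [hrtilde]
    positivity
  have hx₀ : x₀ ∈ Metric.closedBall x₀ rtilde := Metric.mem_closedBall_self hr0
  set y := F h with hy
  set u := A.symm y with hu
  have h1 : F' x₀ u = y := by rw [← hA]; exact A.apply_symm_apply y
  have hdist : ‖x₀ - h‖ ≤ rtilde := by
    have := Metric.mem_closedBall.mp hh
    rw [dist_eq_norm] at this
    calc ‖x₀ - h‖ = ‖h - x₀‖ := by rw [norm_sub_rev]
    _ ≤ rtilde := this
  have hprod : M₂ * rtilde * m₁ ≤ 1 / 2 := by
    rcases eq_or_lt_of_le hm₁0 with hm | hm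
    · rw [← hm]; norm_num
    · have : M₂ * (1 / (2 * M₂ * m₁)) * m₁ = 1 / 2 := by
        field_simp
      rw [hrtilde, this]
  have hunorm : ‖u‖ ≤ m₁ * ‖y‖ := by
    rw [hu, hm₁]
    exact (A.symm : H →L[ℝ] H).le_opNorm y
  have key : |⟪(F' x₀ - F' h) u, y⟫| ≤ (1 / 2) * ‖y‖ ^ 2 := by
    calc |⟪(F' x₀ - F' h) u, y⟫| ≤ ‖(F' x₀ - F' h) u‖ * ‖y‖ :=
          abs_real_inner_le_norm _ _
      _ ≤ (‖F' x₀ - F' h‖ * ‖u‖) * ‖y‖ := by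
          gcongr
          exact (F' x₀ - F' h).le_opNorm u
      _ ≤ ((M₂ * ‖x₀ - h‖) * (m₁ * ‖y‖)) * ‖y‖ := by
          have := mul_le_mul (hLip x₀ hx₀ h hh) hunorm (norm_nonneg u)
            (by positivity)
          exact mul_le_mul_of_nonneg_right this (norm_nonneg y)
      _ ≤ ((M₂ * rtilde) * (m₁ * ‖y‖)) * ‖y‖ := by gcongr
      _ = (M₂ * rtilde * m₁) * ‖y‖ ^ 2 := by ring
      _ ≤ (1 / 2) * ‖y‖ ^ 2 := by
          have : (0:ℝ) ≤ ‖y‖ ^ 2 := by positivity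
          nlinarith
  have e : ⟪F' h u, y⟫ = ‖y‖ ^ 2 - ⟪(F' x₀ - F' h) u, y⟫ := by
    rw [ContinuousLinearMap.sub_apply, inner_sub_left, h1,
      real_inner_self_eq_norm_sq]
    ring
  have main : (1 / 2) * ‖y‖ ^ 2 ≤ ⟪F' h u, y⟫ := by
    rw [e]
    have := (abs_le.mp key).2
    linarith
  refine ⟨main, ?_⟩
  rw [map_neg, inner_neg_left]
  linarith
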